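/- For every positive integer g and every prime p with p ≡ 1 (mod g), there exists a B_2[g] set in Z/((p² − p)/g)Z with exactly p − 1 elements. -/

import Mathlib

/-- Additive `B_h[g]` property. -/
def IsBhg {G : Type*} [AddCommMonoid G] (A : Set G) (h g : ℕ) : Prop :=
  ∀ b : G, ∀ s : Finset (Multiset G),
    (∀ m ∈ s, Multiset.card m = h ∧ (∀ x ∈ m, x ∈ A) ∧ m.sum = b) → s.card ≤ g

lemma isBhg_image {G G' : Type*} [AddCommMonoid G] [AddCommMonoid G'] (e : G ≃+ G')
    (A : Set G) (h g : ℕ) (hA : IsBhg A h g) : IsBhg (⇑e '' A) h g := by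
  classical
  intro b s hs
  have hinj : Function.Injective (Multiset.map (⇑e.symm)) :=
    Multiset.map_injective e.symm.injective
  have key := hA (e.symm b) (s.image (Multiset.map (⇑e.symm))) ?_
  · rwa [Finset.card_image_of_injective _ hinj] at key
  · intro m hm
    simp only [Finset.mem_image] at hm
    obtain ⟨m', hm', rfl⟩ := hm
    obtain ⟨hc, hmem, hsum⟩ := hs m' hm'
    refine ⟨by simp [hc], ?_, ?_⟩
    · intro x hx
      rw [Multiset.mem_map] at hx
      obtain ⟨y, hy, rfl⟩ := hx
      obtain ⟨a, ha, rfl⟩ := hmem y hy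
      simpa using ha
    · rw [← hsum]
      exact (map_multiset_sum e.symm.toAddMonoidHom m').symm

lemma field_pair {K : Type*} [Field K] (x₁ y₁ x₂ y₂ : K)
    (hs : x₁ + y₁ = x₂ + y₂) (hp : x₁ * y₁ = x₂ * y₂) :
    (x₁ = x₂ ∧ y₁ = y₂) ∨ (x₁ = y₂ ∧ y₁ = x₂) := by
  have h0 : (x₁ - x₂) * (x₁ - y₂) = 0 := by linear_combination x₁ * hs - hp
  rcases mul_eq_zero.1 h0 with h | h
  · have hx : x₁ = x₂ := sub_eq_zero.1 h
    left
    exact ⟨hx, by rw [hx] at hs; exact add_left_cancel hs⟩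
  · have hx : x₁ = y₂ := sub_eq_zero.1 h
    right
    refine ⟨hx, ?_⟩
    rw [hx] at hs
    have h2 : y₂ + y₁ = y₂ + x₂ := by rw [hs]; ring
    exact add_left_cancel h2

lemma key_construction (g p : ℕ) (hg : 1 ≤ g) (hp : p.Prime) (hdvd : g ∣ p - 1) :
    ∃ A : Set (ZMod ((p - 1) / g) × ZMod p), IsBhg A 2 g ∧ A.ncard = p - 1 := by
  haveI : Fact p.Prime := ⟨hp⟩
  set m := (p - 1) / g with hm
  have hp2 : 2 ≤ p := hp.two_le
  have hp1 : 1 ≤ p - 1 := by omega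
  have hmg : m * g = p - 1 := Nat.div_mul_cancel hdvd
  have hm1 : 1 ≤ m := by
    rcases Nat.eq_zero_or_pos m with h | h
    · rw [h, zero_mul] at hmg; omega
    · exact h
  haveI : NeZero m := ⟨by omega⟩
  have hmdvd : m ∣ p - 1 := ⟨g, hmg.symm⟩
  obtain ⟨θ, hθ⟩ := IsCyclic.exists_generator (α := (ZMod p)ˣ)
  have hord : orderOf θ = p - 1 := by
    rw [orderOf_eq_card_of_forall_mem_zpowers hθ, Nat.card_eq_fintype_card, ZMod.card_units]
  -- exponent injectivity
  have hexp : ∀ a c : ℕ, a < p - 1 → c < p - 1 →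
      ((θ ^ a : (ZMod p)ˣ) : ZMod p) = ((θ ^ c : (ZMod p)ˣ) : ZMod p) → a = c := by
    intro a c ha hc h
    have hu : θ ^ a = θ ^ c := Units.ext h
    have := pow_inj_mod.1 hu
    rw [hord, Nat.mod_eq_of_lt ha, Nat.mod_eq_of_lt hc] at this
    exact this
  set f : ℕ → ZMod m × ZMod p := fun t => ((t : ZMod m), ((θ ^ t : (ZMod p)ˣ) : ZMod p))
    with hf
  have hfinj : Set.InjOn f (Finset.range (p - 1)) := by
    intro a ha c hc h
    simp only [Finset.coe_range, Set.mem_Iio] at ha hc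
    exact hexp a c ha hc (congrArg Prod.snd h)
  refine ⟨↑((Finset.range (p - 1)).image f), ?_, ?_⟩
  · -- the B_2[g] property
    intro b s hs
    classical
    -- decomposition of valid multisets
    have hdec : ∀ m' ∈ s, ∃ a c : ℕ, a < p - 1 ∧ c < p - 1 ∧ m' = {f a, f c} := by
      intro m' hm'
      obtain ⟨hc2, hmem, _⟩ := hs m' hm'
      obtain ⟨x, y, rfl⟩ := Multiset.card_eq_two.1 hc2
      have hx := hmem x (by simp)
      have hy := hmem y (by simp)
      simp only [Finset.coe_image, Finset.coe_range, Set.mem_image, Set.mem_Iio] at hx hy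
      obtain ⟨a, ha, rfl⟩ := hx
      obtain ⟨c, hc, rfl⟩ := hy
      exact ⟨a, c, ha, hc, rfl⟩
    set φ : Multiset (ZMod m × ZMod p) → ZMod p := fun m' => (m'.map Prod.snd).prod with hφ
    set T : Finset (ZMod p) :=
      (Finset.range g).image (fun i => ((θ ^ (b.1.val + m * i) : (ZMod p)ˣ) : ZMod p)) with hT
    have hcard : s.card ≤ T.card := by
      apply Finset.card_le_card_of_injOn φ
      · -- maps into T
        intro m' hm'
        obtain ⟨a, c, ha, hc, rfl⟩ := hdec m' hm'
        obtain ⟨_, _, hsum0⟩ := hs _ hm'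
        have hsum : f a + f c = b := by simpa using hsum0
        have hφval : φ ({f a, f c} : Multiset (ZMod m × ZMod p))
            = ((θ ^ (a + c) : (ZMod p)ˣ) : ZMod p) := by
          simp [hφ, hf, pow_add]
        have hfst : ((a : ZMod m) + (c : ZMod m)) = b.1 := congrArg Prod.fst hsum
        have hmod1 : (a + c) % m = b.1.val := by
          have : (((a + c : ℕ)) : ZMod m) = b.1 := by push_cast; rw [hfst]
          rw [← this, ZMod.val_natCast]
        set e' := (a + c) % (p - 1) with he'
        have he'lt : e' < p - 1 := Nat.mod_lt _ (by omega)
        have hpow : ((θ ^ (a + c) : (ZMod p)ˣ) : ZMod p)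
            = ((θ ^ e' : (ZMod p)ˣ) : ZMod p) := by
          rw [he', ← hord, pow_mod_orderOf]
        have hmod2 : e' % m = b.1.val := by
          rw [he', Nat.mod_mod_of_dvd _ hmdvd, hmod1]
        have hi : e' / m < g := by
          apply Nat.div_lt_of_lt_mul
          omega
        have heq : e' = b.1.val + m * (e' / m) := by
          have := Nat.div_add_mod e' m
          omega
        simp only [hT, Finset.mem_coe, Finset.mem_image, Finset.mem_range]
        refine ⟨e' / m, hi, ?_⟩
        rw [hφval, hpow]
        exact congrArg (fun n => ((θ ^ n : (ZMod p)ˣ) : ZMod p)) heq.symm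
      · -- injective on s
        intro m₁ hm₁ m₂ hm₂ hφeq
        obtain ⟨a₁, c₁, ha₁, hc₁, rfl⟩ := hdec m₁ hm₁
        obtain ⟨a₂, c₂, ha₂, hc₂, rfl⟩ := hdec m₂ hm₂
        obtain ⟨_, _, hsum₁0⟩ := hs _ hm₁
        obtain ⟨_, _, hsum₂0⟩ := hs _ hm₂
        have hsum₁ : f a₁ + f c₁ = b := by simpa using hsum₁0
        have hsum₂ : f a₂ + f c₂ = b := by simpa using hsum₂0
        have hsnd₁ : ((θ ^ a₁ : (ZMod p)ˣ) : ZMod p) + ((θ ^ c₁ : (ZMod p)ˣ) : ZMod p)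
            = b.2 := congrArg Prod.snd hsum₁
        have hsnd₂ : ((θ ^ a₂ : (ZMod p)ˣ) : ZMod p) + ((θ ^ c₂ : (ZMod p)ˣ) : ZMod p)
            = b.2 := congrArg Prod.snd hsum₂
        have hprod : ((θ ^ a₁ : (ZMod p)ˣ) : ZMod p) * ((θ ^ c₁ : (ZMod p)ˣ) : ZMod p)
            = ((θ ^ a₂ : (ZMod p)ˣ) : ZMod p) * ((θ ^ c₂ : (ZMod p)ˣ) : ZMod p) := by
          have h1 : φ ({f a₁, f c₁} : Multiset (ZMod m × ZMod p))
              = ((θ ^ a₁ : (ZMod p)ˣ) : ZMod p) * ((θ ^ c₁ : (ZMod p)ˣ) : ZMod p) := by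
            simp [hφ, hf]
          have h2 : φ ({f a₂, f c₂} : Multiset (ZMod m × ZMod p))
              = ((θ ^ a₂ : (ZMod p)ˣ) : ZMod p) * ((θ ^ c₂ : (ZMod p)ˣ) : ZMod p) := by
            simp [hφ, hf]
          rw [← h1, ← h2, hφeq]
        rcases field_pair _ _ _ _ (hsnd₁.trans hsnd₂.symm) hprod with ⟨h1, h2⟩ | ⟨h1, h2⟩
        · rw [hexp a₁ a₂ ha₁ ha₂ h1, hexp c₁ c₂ hc₁ hc₂ h2]
        · rw [hexp a₁ c₂ ha₁ hc₂ h1, hexp c₁ a₂ hc₁ ha₂ h2]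
          exact Multiset.cons_swap _ _ _
    calc s.card ≤ T.card := hcard
      _ ≤ (Finset.range g).card := Finset.card_image_le
      _ = g := Finset.card_range g
  · -- cardinality
    rw [Set.ncard_coe_finset, Finset.card_image_of_injOn hfinj, Finset.card_range]

theorem stmt_10 (g p : ℕ) (hg : 1 ≤ g) (hp : p.Prime) (hmod : p ≡ 1 [MOD g]) :
    ∃ A : Set (ZMod ((p ^ 2 - p) / g)), IsBhg A 2 g ∧ A.ncard = p - 1 := by
  have hp2 : 2 ≤ p := hp.two_le
  have hdvd : g ∣ p - 1 := (Nat.modEq_iff_dvd' (by omega)).1 hmod.symm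
  obtain ⟨k, hk⟩ := hdvd
  have hg0 : 0 < g := hg
  have hmk : (p - 1) / g = k := by rw [hk, Nat.mul_div_cancel_left _ hg0]
  have hN : (p ^ 2 - p) / g = (p - 1) / g * p := by
    have h1 : p ^ 2 - p = g * (k * p) := by
      have : p ^ 2 - p = (p - 1) * p := by
        rw [pow_two, Nat.sub_mul, one_mul]
      rw [this, hk, mul_assoc]
    rw [h1, Nat.mul_div_cancel_left _ hg0, hmk]
  rw [hN]
  have hco : Nat.Coprime ((p - 1) / g) p := by
    apply Nat.Coprime.coprime_dvd_left (Nat.div_dvd_of_dvd ⟨k, hk⟩)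
    have hnd : ¬ p ∣ p - 1 := fun hd => by
      have := Nat.le_of_dvd (by omega) hd
      omega
    exact (hp.coprime_iff_not_dvd.2 hnd).symm
  obtain ⟨A, hA, hcard⟩ := key_construction g p hg hp ⟨k, hk⟩
  set e := (ZMod.chineseRemainder hco).symm.toAddEquiv with he
  refine ⟨⇑e '' A, isBhg_image e A 2 g hA, ?_⟩
  rw [Set.ncard_image_of_injective _ e.injective, hcard]
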